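/- Edge deletion preserves the ForwardPush invariant under the DynamicSNE update: let u and v be adjacent vertices of G with d(u) ≥ 2 and d(v) ≥ 2, and let G' be the graph G with the edge {u,v} deleted, with degree function d' (so d'(u) = d(u)−1, d'(v) = d(v)−1, d'(w) = d(w) otherwise) and personalized PageRank vectors π'_x. Suppose p, r ∈ ℝ^V satisfy π_s(w) = p(w) + Σ_{x∈V} r(x)·π_x(w) for every w ∈ V. Define Δ_u = −p(u)/d(u), Δ_v = −p(v)/d(v), p' = p + Δ_u·e_u + Δ_v·e_v, and r' equal to r except r'(u) = r(u) − Δ_u/α + (1−α)·Δ_v/α and r'(v) = r(v) − Δ_v/α + (1−α)·Δ_u/α. Then π'_s(w) = p'(w) + Σ_{x∈V} r'(x)·π'_x(w) for every w ∈ V. -/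

import Mathlib

open Matrix

/-- The random-walk transition matrix `W = D⁻¹ A` of a finite simple graph,
with entries `W i j = A i j / d(i)`. -/
noncomputable def walkMatrix {V : Type*} [Fintype V] [DecidableEq V]
    (G : SimpleGraph V) [DecidableRel G.Adj] : Matrix V V ℝ :=
  (Matrix.diagonal fun i => ((G.degree i : ℝ))⁻¹) * G.adjMatrix ℝ

open Finset

set_option linter.unusedSectionVars false
set_option linter.unusedVariables false

section Helpers

variable {V : Type*} [Fintype V] [DecidableEq V]

lemma transpose_mulVec_apply (M : Matrix V V ℝ) (f : V → ℝ) (w : V) :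
    (Mᵀ *ᵥ f) w = ∑ x : V, M x w * f x := by
  simp [Matrix.mulVec, dotProduct]

lemma walkMatrix_apply (G : SimpleGraph V) [DecidableRel G.Adj] (i j : V) :
    walkMatrix G i j = (G.degree i : ℝ)⁻¹ * G.adjMatrix ℝ i j := by
  rw [walkMatrix, Matrix.diagonal_mul]

lemma sum_mul_sum_comm (c r : V → ℝ) (π : V → V → ℝ) :
    ∑ y : V, c y * ∑ x : V, r x * π x y = ∑ x : V, r x * ∑ y : V, c y * π x y := by
  simp_rw [Finset.mul_sum]
  rw [Finset.sum_comm]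
  exact Finset.sum_congr rfl fun x _ => Finset.sum_congr rfl fun y _ => by ring

lemma sum_single_mul (r : V → ℝ) (w : V) :
    ∑ x : V, r x * (Pi.single x 1 : V → ℝ) w = r w := by
  simp [Pi.single_apply]

end Helpers

section Main

variable {V : Type*} [Fintype V] [DecidableEq V]

lemma ppv_eq (H : SimpleGraph V) [DecidableRel H.Adj] (α : ℝ) (π : V → V → ℝ)
    (hπ : ∀ x : V,
      π x = α • (Pi.single x 1 : V → ℝ) + (1 - α) • ((walkMatrix H)ᵀ *ᵥ π x))
    (x w : V) :
    α * (Pi.single x 1 : V → ℝ) w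
      = π x w - (1 - α) * ((walkMatrix H)ᵀ *ᵥ π x) w := by
  have h := congrFun (hπ x) w
  simp only [Pi.add_apply, Pi.smul_apply, smul_eq_mul] at h
  linarith

lemma residual_of_invariant (H : SimpleGraph V) [DecidableRel H.Adj] (α : ℝ)
    (π : V → V → ℝ)
    (hπ : ∀ x : V,
      π x = α • (Pi.single x 1 : V → ℝ) + (1 - α) • ((walkMatrix H)ᵀ *ᵥ π x))
    (s : V) (p r : V → ℝ)
    (hinv : ∀ w : V, π s w = p w + ∑ x : V, r x * π x w) (w : V) :
    α * (Pi.single s 1 : V → ℝ) w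
      = p w - (1 - α) * ((walkMatrix H)ᵀ *ᵥ p) w + α * r w := by
  have hT : ((walkMatrix H)ᵀ *ᵥ π s) w
      = ((walkMatrix H)ᵀ *ᵥ p) w + ∑ x : V, r x * ((walkMatrix H)ᵀ *ᵥ π x) w := by
    simp only [transpose_mulVec_apply]
    calc ∑ x : V, walkMatrix H x w * π s x
        = ∑ y : V, walkMatrix H y w * (p y + ∑ x : V, r x * π x y) := by
          exact Finset.sum_congr rfl fun y _ => by rw [hinv y]
      _ = ∑ y : V, walkMatrix H y w * p y
            + ∑ y : V, walkMatrix H y w * ∑ x : V, r x * π x y := by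
          simp_rw [mul_add, Finset.sum_add_distrib]
      _ = ∑ y : V, walkMatrix H y w * p y
            + ∑ x : V, r x * ∑ y : V, walkMatrix H y w * π x y := by
          rw [sum_mul_sum_comm]
  have h1 := ppv_eq H α π hπ s w
  have h2 : ∑ x : V, r x * (π x w - (1 - α) * ((walkMatrix H)ᵀ *ᵥ π x) w)
      = α * r w := by
    calc ∑ x : V, r x * (π x w - (1 - α) * ((walkMatrix H)ᵀ *ᵥ π x) w)
        = ∑ x : V, r x * (α * (Pi.single x 1 : V → ℝ) w) := by
          exact Finset.sum_congr rfl fun x _ => by rw [← ppv_eq H α π hπ x w]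
      _ = α * ∑ x : V, r x * (Pi.single x 1 : V → ℝ) w := by
          rw [Finset.mul_sum]; exact Finset.sum_congr rfl fun x _ => by ring
      _ = α * r w := by rw [sum_single_mul]
  have h3 : ∑ x : V, r x * (π x w - (1 - α) * ((walkMatrix H)ᵀ *ᵥ π x) w)
      = ∑ x : V, r x * π x w
        - (1 - α) * ∑ x : V, r x * ((walkMatrix H)ᵀ *ᵥ π x) w := by
    rw [Finset.mul_sum, ← Finset.sum_sub_distrib]
    exact Finset.sum_congr rfl fun x _ => by ring
  rw [h1, hinv w, hT]
  rw [h3] at h2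
  linarith

lemma invariant_of_residual (H : SimpleGraph V) [DecidableRel H.Adj]
    (α : ℝ) (hα : α ∈ Set.Ioo (0:ℝ) 1) (hd : ∀ w : V, 0 < H.degree w)
    (π : V → V → ℝ)
    (hπ : ∀ x : V,
      π x = α • (Pi.single x 1 : V → ℝ) + (1 - α) • ((walkMatrix H)ᵀ *ᵥ π x))
    (s : V) (p r : V → ℝ)
    (hres : ∀ w : V, α * (Pi.single s 1 : V → ℝ) w
      = p w - (1 - α) * ((walkMatrix H)ᵀ *ᵥ p) w + α * r w) :
    ∀ w : V, π s w = p w + ∑ x : V, r x * π x w := by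
  obtain ⟨hα0, hα1⟩ := hα
  set q : V → ℝ := fun w => π s w - (p w + ∑ x : V, r x * π x w) with hqdef
  set z : V → ℝ := fun w => ((H.degree w : ℝ))⁻¹ * q w with hzdef
  have hq : ∀ w : V, q w = (1 - α) * ∑ y ∈ H.neighborFinset w, z y := by
    intro w
    have hTq : ∑ x : V, walkMatrix H x w * q x
        = ((walkMatrix H)ᵀ *ᵥ π s) w - ((walkMatrix H)ᵀ *ᵥ p) w
          - ∑ x : V, r x * ((walkMatrix H)ᵀ *ᵥ π x) w := by
      simp only [transpose_mulVec_apply]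
      calc ∑ x : V, walkMatrix H x w * q x
          = ∑ y : V, (walkMatrix H y w * π s y - walkMatrix H y w * p y
              - walkMatrix H y w * ∑ x : V, r x * π x y) := by
            exact Finset.sum_congr rfl fun y _ => by rw [hqdef]; ring
        _ = ∑ y : V, walkMatrix H y w * π s y - ∑ y : V, walkMatrix H y w * p y
              - ∑ y : V, walkMatrix H y w * ∑ x : V, r x * π x y := by
            simp_rw [Finset.sum_sub_distrib]
        _ = _ := by rw [sum_mul_sum_comm]
    have hs := ppv_eq H α π hπ s w
    have hr := hres w
    have hx : ∑ x : V, r x * (π x w - (1 - α) * ((walkMatrix H)ᵀ *ᵥ π x) w)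
        = α * r w := by
      calc ∑ x : V, r x * (π x w - (1 - α) * ((walkMatrix H)ᵀ *ᵥ π x) w)
          = α * ∑ x : V, r x * (Pi.single x 1 : V → ℝ) w := by
            rw [Finset.mul_sum]
            exact Finset.sum_congr rfl fun x _ => by
              rw [← ppv_eq H α π hπ x w]; ring
        _ = α * r w := by rw [sum_single_mul]
    have hx' : ∑ x : V, r x * π x w
        - (1 - α) * ∑ x : V, r x * ((walkMatrix H)ᵀ *ᵥ π x) w = α * r w := by
      rw [← hx, Finset.mul_sum, ← Finset.sum_sub_distrib]
      exact Finset.sum_congr rfl fun x _ => by ring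
    -- q w = (1-α) * ∑ x, walkMatrix H x w * q x
    have hq1 : q w = (1 - α) * ∑ x : V, walkMatrix H x w * q x := by
      rw [hTq, hqdef]
      simp only
      nlinarith [hs, hr, hx']
    have hq2 : ∑ x : V, walkMatrix H x w * q x
        = ∑ y ∈ H.neighborFinset w, z y := by
      calc ∑ x : V, walkMatrix H x w * q x
          = ∑ x : V, H.adjMatrix ℝ w x * z x := by
            refine Finset.sum_congr rfl fun x _ => ?_
            rw [walkMatrix_apply, hzdef]
            simp only
            have : H.adjMatrix ℝ x w = H.adjMatrix ℝ w x := by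
              simp [SimpleGraph.adjMatrix_apply, SimpleGraph.adj_comm]
            rw [this]; ring
        _ = (H.adjMatrix ℝ *ᵥ z) w := by
            simp [Matrix.mulVec, dotProduct]
        _ = ∑ y ∈ H.neighborFinset w, z y := by
            rw [SimpleGraph.adjMatrix_mulVec_apply]
    rw [hq1, hq2]
  -- contraction: z = 0
  obtain ⟨i, _, hi⟩ := Finset.exists_max_image (Finset.univ : Finset V)
    (fun x => |z x|) ⟨s, Finset.mem_univ s⟩
  have hdi : (0:ℝ) < (H.degree i : ℝ) := by exact_mod_cast hd i
  have hzi : |z i| ≤ (1 - α) * |z i| := by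
    have hsum : |∑ y ∈ H.neighborFinset i, z y| ≤ (H.degree i : ℝ) * |z i| := by
      calc |∑ y ∈ H.neighborFinset i, z y|
          ≤ ∑ y ∈ H.neighborFinset i, |z y| :=
            Finset.abs_sum_le_sum_abs _ _
        _ ≤ ∑ _y ∈ H.neighborFinset i, |z i| :=
            Finset.sum_le_sum fun y _ => hi y (Finset.mem_univ y)
        _ = (H.degree i : ℝ) * |z i| := by
            rw [Finset.sum_const, nsmul_eq_mul, SimpleGraph.card_neighborFinset_eq_degree]
    have hq1 : |q i| ≤ (1 - α) * ((H.degree i : ℝ) * |z i|) := by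
      rw [hq i, abs_mul, abs_of_pos (by linarith : (0:ℝ) < 1 - α)]
      exact mul_le_mul_of_nonneg_left hsum (by linarith)
    have hzq : |z i| = (H.degree i : ℝ)⁻¹ * |q i| := by
      rw [hzdef]
      simp only
      rw [abs_mul, abs_of_pos (inv_pos.mpr hdi)]
    calc |z i| = (H.degree i : ℝ)⁻¹ * |q i| := hzq
      _ ≤ (H.degree i : ℝ)⁻¹ * ((1 - α) * ((H.degree i : ℝ) * |z i|)) :=
          mul_le_mul_of_nonneg_left hq1 (le_of_lt (inv_pos.mpr hdi))
      _ = (1 - α) * |z i| := by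
          field_simp
  have hzi0 : |z i| = 0 := by
    nlinarith [abs_nonneg (z i)]
  have hz0 : ∀ x : V, z x = 0 := fun x =>
    abs_eq_zero.mp (le_antisymm (hzi0 ▸ hi x (Finset.mem_univ x)) (abs_nonneg _))
  have hq0 : ∀ w : V, q w = 0 := by
    intro w
    rw [hq w]
    simp [hz0]
  intro w
  have := hq0 w
  rw [hqdef] at this
  simp only at this
  linarith

end Main

/-- Edge deletion preserves the ForwardPush invariant under the DynamicSNE update:
if `G'` is `G` with the edge `{u,v}` deleted (where `u ~ v`, `d(u) ≥ 2`, `d(v) ≥ 2`),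
`(p, r)` satisfies the ForwardPush invariant for `s` on `G`, and with
`Δ_u = −p(u)/d(u)`, `Δ_v = −p(v)/d(v)` we set `p' = p + Δ_u·e_u + Δ_v·e_v`,
`r'(u) = r(u) − Δ_u/α + (1−α)·Δ_v/α`, `r'(v) = r(v) − Δ_v/α + (1−α)·Δ_u/α`, and
`r'(w) = r(w)` otherwise, then `(p', r')` satisfies the ForwardPush invariant for `s`
on `G'`. -/
theorem edge_deletion_preserves_invariant
    {V : Type*} [Fintype V] [DecidableEq V]
    (G G' : SimpleGraph V) [DecidableRel G.Adj] [DecidableRel G'.Adj]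
    (α : ℝ) (hα : α ∈ Set.Ioo (0 : ℝ) 1)
    (u v : V) (hadj : G.Adj u v)
    (hdu : 2 ≤ G.degree u) (hdv : 2 ≤ G.degree v)
    (hG' : ∀ a b : V,
      G'.Adj a b ↔ G.Adj a b ∧ ¬((a = u ∧ b = v) ∨ (a = v ∧ b = u)))
    (hd : ∀ w : V, 0 < G.degree w) (hd' : ∀ w : V, 0 < G'.degree w)
    (π π' : V → V → ℝ)
    (hπ : ∀ x : V,
      π x = α • (Pi.single x 1 : V → ℝ) + (1 - α) • ((walkMatrix G)ᵀ *ᵥ π x))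
    (hπ' : ∀ x : V,
      π' x = α • (Pi.single x 1 : V → ℝ) + (1 - α) • ((walkMatrix G')ᵀ *ᵥ π' x))
    (s : V) (p r : V → ℝ)
    (hinv : ∀ w : V, π s w = p w + ∑ x : V, r x * π x w)
    (Δu Δv : ℝ)
    (hΔu : Δu = -(p u) / (G.degree u : ℝ)) (hΔv : Δv = -(p v) / (G.degree v : ℝ))
    (p' r' : V → ℝ)
    (hp' : p' = p + Δu • (Pi.single u 1 : V → ℝ) + Δv • (Pi.single v 1 : V → ℝ))
    (hr'u : r' u = r u - Δu / α + (1 - α) * Δv / α)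
    (hr'v : r' v = r v - Δv / α + (1 - α) * Δu / α)
    (hr' : ∀ w : V, w ≠ u → w ≠ v → r' w = r w) :
    ∀ w : V, π' s w = p' w + ∑ x : V, r' x * π' x w := by
  obtain ⟨hα0, hα1⟩ := hα
  have hne : u ≠ v := hadj.ne
  -- neighborhoods of G'
  have hNu : G'.neighborFinset u = (G.neighborFinset u).erase v := by
    ext x
    rw [SimpleGraph.mem_neighborFinset, Finset.mem_erase,
      SimpleGraph.mem_neighborFinset, hG' u x]
    constructor
    · rintro ⟨h1, h2⟩
      exact ⟨fun hx => h2 (Or.inl ⟨rfl, hx⟩), h1⟩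
    · rintro ⟨hx, h1⟩
      refine ⟨h1, ?_⟩
      rintro (⟨-, h⟩ | ⟨h, -⟩)
      · exact hx h
      · exact hne h
  have hNv : G'.neighborFinset v = (G.neighborFinset v).erase u := by
    ext x
    rw [SimpleGraph.mem_neighborFinset, Finset.mem_erase,
      SimpleGraph.mem_neighborFinset, hG' v x]
    constructor
    · rintro ⟨h1, h2⟩
      exact ⟨fun hx => h2 (Or.inr ⟨rfl, hx⟩), h1⟩
    · rintro ⟨hx, h1⟩
      refine ⟨h1, ?_⟩
      rintro (⟨h, -⟩ | ⟨-, h⟩)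
      · exact hne h.symm
      · exact hx h
  have hNo : ∀ x : V, x ≠ u → x ≠ v → G'.neighborFinset x = G.neighborFinset x := by
    intro x hxu hxv
    ext y
    rw [SimpleGraph.mem_neighborFinset, SimpleGraph.mem_neighborFinset, hG' x y]
    constructor
    · exact fun h => h.1
    · intro h
      refine ⟨h, ?_⟩
      rintro (⟨h1, -⟩ | ⟨h1, -⟩)
      · exact hxu h1
      · exact hxv h1
  -- degree facts over ℝ
  have hduR : (G'.degree u : ℝ) = (G.degree u : ℝ) - 1 := by
    have h1 : G'.degree u = G.degree u - 1 := by
      rw [← SimpleGraph.card_neighborFinset_eq_degree, hNu,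
        Finset.card_erase_of_mem ((G.mem_neighborFinset u v).mpr hadj),
        SimpleGraph.card_neighborFinset_eq_degree]
    rw [h1, Nat.cast_sub (le_trans one_le_two hdu), Nat.cast_one]
  have hdvR : (G'.degree v : ℝ) = (G.degree v : ℝ) - 1 := by
    have h1 : G'.degree v = G.degree v - 1 := by
      rw [← SimpleGraph.card_neighborFinset_eq_degree, hNv,
        Finset.card_erase_of_mem ((G.mem_neighborFinset v u).mpr hadj.symm),
        SimpleGraph.card_neighborFinset_eq_degree]
    rw [h1, Nat.cast_sub (le_trans one_le_two hdv), Nat.cast_one]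
  have hdoR : ∀ x : V, x ≠ u → x ≠ v → (G'.degree x : ℝ) = (G.degree x : ℝ) := by
    intro x hxu hxv
    rw [← SimpleGraph.card_neighborFinset_eq_degree, hNo x hxu hxv,
      SimpleGraph.card_neighborFinset_eq_degree]
  have hDu : (2:ℝ) ≤ (G.degree u : ℝ) := by exact_mod_cast hdu
  have hDv : (2:ℝ) ≤ (G.degree v : ℝ) := by exact_mod_cast hdv
  have hDu0 : (G.degree u : ℝ) ≠ 0 := by linarith
  have hDu1 : (G.degree u : ℝ) - 1 ≠ 0 := by linarith
  have hDv0 : (G.degree v : ℝ) ≠ 0 := by linarith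
  have hDv1 : (G.degree v : ℝ) - 1 ≠ 0 := by linarith
  -- p' values
  have hp'u : p' u = p u + Δu := by
    rw [hp']
    simp [Pi.single_apply, hne]
  have hp'v : p' v = p v + Δv := by
    rw [hp']
    simp [Pi.single_apply, Ne.symm hne]
  have hp'o : ∀ x : V, x ≠ u → x ≠ v → p' x = p x := by
    intro x hxu hxv
    rw [hp']
    simp [Pi.single_apply, hxu, hxv]
  refine invariant_of_residual G' α ⟨hα0, hα1⟩ hd' π' hπ' s p' r' ?_
  intro w
  have hres := residual_of_invariant G α π hπ s p r hinv w
  have hsplit : ∀ x : V, walkMatrix G' x w * p' x - walkMatrix G x w * p x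
      = (if x = u then (if w = v then Δu else 0) else 0)
        + (if x = v then (if w = u then Δv else 0) else 0) := by
    intro x
    rw [walkMatrix_apply, walkMatrix_apply]
    by_cases hxu : x = u
    · rw [hxu, if_pos rfl, if_neg hne, hp'u, hduR]
      by_cases hwv : w = v
      · rw [hwv, if_pos rfl]
        have hA' : G'.adjMatrix ℝ u v = 0 := by
          simp [SimpleGraph.adjMatrix_apply, hG' u v]
        have hA : G.adjMatrix ℝ u v = 1 := by
          simp [SimpleGraph.adjMatrix_apply, hadj]
        rw [hA', hA, hΔu]
        field_simp
        ring
      · rw [if_neg hwv]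
        have hA : G'.adjMatrix ℝ u w = G.adjMatrix ℝ u w := by
          simp [SimpleGraph.adjMatrix_apply, hG' u w, hwv, hne]
        rw [hA, hΔu]
        field_simp
        ring_nf
    · rw [if_neg hxu]
      by_cases hxv : x = v
      · rw [hxv, if_pos rfl, hp'v, hdvR]
        by_cases hwu : w = u
        · rw [hwu, if_pos rfl]
          have hA' : G'.adjMatrix ℝ v u = 0 := by
            simp [SimpleGraph.adjMatrix_apply, hG' v u]
          have hA : G.adjMatrix ℝ v u = 1 := by
            simp [SimpleGraph.adjMatrix_apply, hadj.symm]
          rw [hA', hA, hΔv]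
          field_simp
          ring
        · rw [if_neg hwu]
          have hA : G'.adjMatrix ℝ v w = G.adjMatrix ℝ v w := by
            simp [SimpleGraph.adjMatrix_apply, hG' v w, hwu, Ne.symm hne]
          rw [hA, hΔv]
          field_simp
          ring_nf
      · rw [if_neg hxv, hp'o x hxu hxv, hdoR x hxu hxv]
        have hA : G'.adjMatrix ℝ x w = G.adjMatrix ℝ x w := by
          simp [SimpleGraph.adjMatrix_apply, hG' x w, hxu, hxv]
        rw [hA]
        ring
  have hstep : ((walkMatrix G')ᵀ *ᵥ p') w = ((walkMatrix G)ᵀ *ᵥ p) w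
      + ((if w = v then Δu else 0) + (if w = u then Δv else 0)) := by
    have h1 : ∑ x : V, walkMatrix G' x w * p' x - ∑ x : V, walkMatrix G x w * p x
        = (if w = v then Δu else 0) + (if w = u then Δv else 0) := by
      rw [← Finset.sum_sub_distrib]
      simp_rw [hsplit]
      rw [Finset.sum_add_distrib]
      simp [Finset.sum_ite_eq']
    simp only [transpose_mulVec_apply]
    linarith
  rw [hres, hstep]
  by_cases hwu : w = u
  · rw [hwu, hp'u, hr'u, if_neg hne, if_pos rfl]
    field_simp
    ring
  · by_cases hwv : w = v
    · rw [hwv, hp'v, hr'v, if_pos rfl, if_neg (Ne.symm hne)]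
      field_simp
      ring
    · rw [hp'o w hwu hwv, hr' w hwu hwv, if_neg hwv, if_neg hwu]
      ring
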